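/- Let (T,𝒯) be a measurable space, Y a T-valued random variable, 𝒢 a σ-algebra with Y measurable with respect to 𝒢, and ξ = (ξ_i) a sequence of S-valued random variables that is conditionally i.i.d. given 𝒢. Let f: T × S → ℝ be measurable with E|f(Y, ξ₁)| < ∞, and let Z be any version of E[f(Y, ξ₁) | 𝒢]. Then P(lim_{n→∞} n⁻¹ ∑_{i=1}^n f(Y, ξ_i) = Z | 𝒢) = 1 almost surely; in particular, n⁻¹ ∑_{i=1}^n f(Y, ξ_i) → E[f(Y, ξ₁) | 𝒢] almost surely. -/

import Mathlib

open MeasureTheory ProbabilityTheory TopologicalSpace Filter Topology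

noncomputable section

/-- `π` is the infinite product (i.i.d.) measure on `ℕ → X` with all factors `ν`. -/
def IsIIDProduct {X : Type*} [MeasurableSpace X] (ν : Measure X) (π : Measure (ℕ → X)) : Prop :=
  IsProbabilityMeasure π ∧
    ∀ (n : ℕ) (A : Fin n → Set X), (∀ i, MeasurableSet (A i)) →
      π {x | ∀ i : Fin n, x (i : ℕ) ∈ A i} = ∏ i : Fin n, ν (A i)

section AuxLemmas

variable {X : Type*} [MeasurableSpace X]

lemma IsIIDProduct.cyl {ν : Measure X} [IsProbabilityMeasure ν] {π : Measure (ℕ → X)}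
    (h : IsIIDProduct ν π) (s : Finset ℕ) (A : ℕ → Set X) (hA : ∀ i, MeasurableSet (A i)) :
    π {x | ∀ i ∈ s, x i ∈ A i} = ∏ i ∈ s, ν (A i) := by
  classical
  set n : ℕ := s.sup id + 1 with hn
  have hlt : ∀ i ∈ s, i < n := fun i hi => Nat.lt_succ_of_le (Finset.le_sup (f := id) hi)
  set A' : Fin n → Set X := fun k => if (k : ℕ) ∈ s then A k else Set.univ with hA'
  have hA'm : ∀ k, MeasurableSet (A' k) := by
    intro k; by_cases hk : (k : ℕ) ∈ s <;> simp [hA', hk, hA]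
  have hset : {x : ℕ → X | ∀ k : Fin n, x (k : ℕ) ∈ A' k} = {x | ∀ i ∈ s, x i ∈ A i} := by
    ext x
    constructor
    · intro hx i hi
      have := hx ⟨i, hlt i hi⟩
      simpa [hA', hi] using this
    · intro hx k
      by_cases hk : (k : ℕ) ∈ s
      · simpa [hA', hk] using hx _ hk
      · simp [hA', hk]
  have := h.2 n A' hA'm
  rw [hset] at this
  rw [this]
  have h1 : ∀ k : Fin n, ν (A' k) = if (k : ℕ) ∈ s then ν (A k) else 1 := by
    intro k; by_cases hk : (k : ℕ) ∈ s <;> simp [hA', hk]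
  calc ∏ k : Fin n, ν (A' k) = ∏ k : Fin n, (fun m => if m ∈ s then ν (A m) else 1) (k : ℕ) := by
        simp_rw [h1]
    _ = ∏ k ∈ Finset.range n, (if k ∈ s then ν (A k) else 1) :=
        Fin.prod_univ_eq_prod_range (fun m => if m ∈ s then ν (A m) else 1) n
    _ = ∏ k ∈ Finset.range n ∩ s, ν (A k) := Finset.prod_ite_mem _ _ _
    _ = ∏ k ∈ s, ν (A k) := by
        rw [Finset.inter_eq_right.mpr (fun i hi => Finset.mem_range.mpr (hlt i hi))]

lemma IsIIDProduct.map_eval {ν : Measure X} [IsProbabilityMeasure ν] {π : Measure (ℕ → X)}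
    (h : IsIIDProduct ν π) (i : ℕ) : π.map (fun x => x i) = ν := by
  ext B hB
  rw [Measure.map_apply (measurable_pi_apply i) hB]
  have : (fun x : ℕ → X => x i) ⁻¹' B = {x | ∀ j ∈ ({i} : Finset ℕ), x j ∈ B} := by
    ext x; simp
  rw [this, h.cyl ({i} : Finset ℕ) (fun _ => B) (fun _ => hB), Finset.prod_singleton]

lemma IsIIDProduct.indepFun_eval {ν : Measure X} [IsProbabilityMeasure ν] {π : Measure (ℕ → X)}
    (h : IsIIDProduct ν π) {i j : ℕ} (hij : i ≠ j) :
    IndepFun (fun x : ℕ → X => x i) (fun x : ℕ → X => x j) π := by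
  classical
  haveI := h.1
  rw [indepFun_iff_measure_inter_preimage_eq_mul]
  intro B C hB hC
  set A : ℕ → Set X := fun k => if k = i then B else C with hA
  have hAm : ∀ k, MeasurableSet (A k) := by
    intro k; by_cases hk : k = i <;> simp [hA, hk, hB, hC]
  have hset : (fun x : ℕ → X => x i) ⁻¹' B ∩ (fun x : ℕ → X => x j) ⁻¹' C
      = {x | ∀ k ∈ ({i, j} : Finset ℕ), x k ∈ A k} := by
    ext x
    simp only [Set.mem_inter_iff, Set.mem_preimage, Set.mem_setOf_eq, Finset.mem_insert,
      Finset.mem_singleton]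
    constructor
    · rintro ⟨h1, h2⟩ k (rfl | rfl)
      · simp [hA, h1]
      · simp [hA, hij.symm, h2]
    · intro hx
      refine ⟨?_, ?_⟩
      · simpa [hA] using hx i (Or.inl rfl)
      · simpa [hA, hij.symm] using hx j (Or.inr rfl)
  have hBi : π ((fun x : ℕ → X => x i) ⁻¹' B) = ν B := by
    rw [← Measure.map_apply (measurable_pi_apply i) hB, h.map_eval i]
  have hCj : π ((fun x : ℕ → X => x j) ⁻¹' C) = ν C := by
    rw [← Measure.map_apply (measurable_pi_apply j) hC, h.map_eval j]
  rw [hset, h.cyl _ A hAm, Finset.prod_pair hij, hBi, hCj]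
  simp [hA, hij.symm]

lemma iid_measurable {Ω : Type*} [MeasurableSpace Ω] (ν : Ω → Measure X)
    (hν : Measurable ν) (hνp : ∀ ω, IsProbabilityMeasure (ν ω))
    (πf : Ω → Measure (ℕ → X)) (hπf : ∀ ω, IsIIDProduct (ν ω) (πf ω)) :
    Measurable πf := by
  haveI : ∀ ω, IsProbabilityMeasure (πf ω) := fun ω => (hπf ω).1
  refine Measure.measurable_of_measurable_coe _ fun B hB => ?_
  have h_eq : MeasurableSpace.pi (X := fun _ : ℕ => X)
      = MeasurableSpace.generateFrom (squareCylinders fun _ : ℕ => {s : Set X | MeasurableSet s}) :=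
    generateFrom_squareCylinders.symm
  have H : ∀ ⦃t : Set (ℕ → X)⦄, MeasurableSet t → Measurable fun ω => πf ω t := by
    refine fun t ht => MeasurableSpace.induction_on_inter
      (C := fun t _ => Measurable fun ω => πf ω t) h_eq
      (isPiSystem_squareCylinders (fun _ => MeasurableSpace.isPiSystem_measurableSet)
        (fun _ => MeasurableSet.univ)) (by simp) ?_ ?_ ?_ t ht
    · rintro t ⟨s, A, hA, rfl⟩
      have hAm : ∀ i, MeasurableSet (A i) := fun i => hA i (Set.mem_univ i)
      have heq : (fun ω => πf ω ((s : Set ℕ).pi A)) = fun ω => ∏ i ∈ s, ν ω (A i) := by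
        funext ω
        have h2 : (s : Set ℕ).pi A = {x | ∀ i ∈ s, x i ∈ A i} := by
          ext x; simp [Set.mem_pi]
        rw [h2, (hπf ω).cyl s A hAm]
      rw [heq]
      exact Finset.measurable_prod _ fun i _ => (Measure.measurable_coe (hAm i)).comp hν
    · intro t ht iht
      have heq : (fun ω => πf ω tᶜ) = fun ω => 1 - πf ω t := by
        funext ω
        rw [measure_compl ht (measure_ne_top _ _), measure_univ]
      rw [heq]
      exact measurable_const.sub iht
    · intro g hdisj hg ihg
      have heq : (fun ω => πf ω (⋃ i, g i)) = fun ω => ∑' i, πf ω (g i) := by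
        funext ω; exact measure_iUnion hdisj hg
      rw [heq]
      exact Measurable.ennreal_tsum ihg
  exact H hB

end AuxLemmas

lemma aux_map {Ω Ω' S' : Type*} [MeasurableSpace Ω] [MeasurableSpace Ω'] [MeasurableSpace S']
    (P : Measure Ω) [IsProbabilityMeasure P] (π : Ω → Ω') (hπ : Measurable π)
    (κ : Kernel Ω' S') [IsMarkovKernel κ] (X : Ω → S') (hX : Measurable X)
    (hrect : ∀ C, MeasurableSet C → ∀ B, MeasurableSet B →
      P (π ⁻¹' C ∩ X ⁻¹' B) = ∫⁻ ω' in C, κ ω' B ∂(P.map π)) :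
    P.map (fun ω => (π ω, X ω)) = (P.map π) ⊗ₘ κ := by
  haveI : IsProbabilityMeasure (P.map π) := Measure.isProbabilityMeasure_map hπ.aemeasurable
  haveI : IsProbabilityMeasure (P.map (fun ω => (π ω, X ω))) :=
    Measure.isProbabilityMeasure_map (hπ.prodMk hX).aemeasurable
  refine MeasureTheory.ext_of_generate_finite _ generateFrom_prod.symm isPiSystem_prod ?_ ?_
  · rintro s ⟨C, hC, B, hB, rfl⟩
    rw [Measure.map_apply (hπ.prodMk hX) (hC.prod hB), Measure.compProd_apply_prod hC hB]
    have hpre : (fun ω => (π ω, X ω)) ⁻¹' (C ×ˢ B) = π ⁻¹' C ∩ X ⁻¹' B := rfl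
    rw [hpre]
    exact hrect C hC B hB
  · simp

lemma aux_condexp {Ω Ω' S' : Type*} [mΩ : MeasurableSpace Ω] [mΩ' : MeasurableSpace Ω']
    [MeasurableSpace S']
    (P : Measure Ω) [IsProbabilityMeasure P] (π : Ω → Ω') (hπ : Measurable π)
    (κ : Kernel Ω' S') [IsMarkovKernel κ] (X : Ω → S') (hX : Measurable X)
    (hmap : P.map (fun ω => (π ω, X ω)) = (P.map π) ⊗ₘ κ)
    (g : Ω' × S' → ℝ) (hg : StronglyMeasurable g)
    (hgi : Integrable (fun ω => g (π ω, X ω)) P) :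
    P[(fun ω => g (π ω, X ω)) | mΩ'.comap π] =ᵐ[P] fun ω => ∫ x, g (π ω, x) ∂κ (π ω) := by
  have hle : mΩ'.comap π ≤ mΩ := hπ.comap_le
  haveI : IsFiniteMeasure (P.trim hle) :=
    ⟨by rw [trim_measurableSet_eq hle MeasurableSet.univ]; exact measure_lt_top P _⟩
  have hgρ : Integrable g (P.map π ⊗ₘ κ) := by
    rw [← hmap]
    exact (integrable_map_measure hg.aestronglyMeasurable (hπ.prodMk hX).aemeasurable).mpr hgi
  set h : Ω' → ℝ := fun ω' => ∫ x, g (ω', x) ∂κ ω' with hh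
  have hhm : StronglyMeasurable h := hg.integral_kernel_prod_right'
  have hhint : Integrable h (P.map π) := hgρ.integral_compProd
  have hhP : Integrable (fun ω => h (π ω)) P :=
    (integrable_map_measure hhm.aestronglyMeasurable hπ.aemeasurable).mp hhint
  have hπc : @Measurable Ω Ω' (mΩ'.comap π) mΩ' π := measurable_iff_comap_le.2 le_rfl
  refine (ae_eq_condExp_of_forall_setIntegral_eq hle hgi
    (fun s _ _ => hhP.integrableOn) ?_
    (StronglyMeasurable.aestronglyMeasurable (hhm.comp_measurable hπc))).symm
  rintro s ⟨C, hC, rfl⟩ -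
  have h1 : ∫ x in π ⁻¹' C, h (π x) ∂P = ∫ ω' in C, h ω' ∂(P.map π) :=
    (setIntegral_map hC hhm.aestronglyMeasurable hπ.aemeasurable).symm
  have h2 : ∫ ω' in C, h ω' ∂(P.map π)
      = ∫ p in C ×ˢ Set.univ, g p ∂(P.map π ⊗ₘ κ) := by
    rw [Measure.setIntegral_compProd hC MeasurableSet.univ (hgρ.integrableOn)]
    simp [hh]
  have h3 : ∫ p in C ×ˢ Set.univ, g p ∂(P.map π ⊗ₘ κ)
      = ∫ x in π ⁻¹' C, g (π x, X x) ∂P := by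
    rw [← hmap, setIntegral_map (hC.prod MeasurableSet.univ) hg.aestronglyMeasurable
      (hπ.prodMk hX).aemeasurable]
    have : (fun a => (π a, X a)) ⁻¹' (C ×ˢ Set.univ) = π ⁻¹' C := by
      ext ω; simp
    rw [this]
  rw [h1, h2, h3]

lemma measurableSet_tendsto_fun' {β γ ι : Type*} {mβ : MeasurableSpace β} [MeasurableSpace γ]
    [Countable ι] {l : Filter ι} [l.IsCountablyGenerated] [TopologicalSpace γ]
    [SecondCountableTopology γ] [TopologicalSpace.PseudoMetrizableSpace γ]
    [OpensMeasurableSpace γ] {f : ι → β → γ} (hf : ∀ i, Measurable (f i)) {g : β → γ}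
    (hg : Measurable g) :
    MeasurableSet {x | Tendsto (fun n => f n x) l (𝓝 (g x))} :=
  measurableSet_tendsto_fun hf hg

lemma integrable_map_iff' {α β : Type*} {mα : MeasurableSpace α} {mβ : MeasurableSpace β}
    {μ : Measure α} {f : α → β} {g : β → ℝ}
    (hg : AEStronglyMeasurable g (μ.map f)) (hf : Measurable f) :
    Integrable g (μ.map f) ↔ Integrable (fun x => g (f x)) μ :=
  integrable_map_measure hg hf.aemeasurable

lemma ae_integrable_compProd' {α β : Type*} {mα : MeasurableSpace α} {mβ : MeasurableSpace β}
    {μ : Measure α} [SFinite μ] {κ : Kernel α β} [IsSFiniteKernel κ] {f : α × β → ℝ}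
    (hf : AEStronglyMeasurable f (μ ⊗ₘ κ)) (hi : Integrable f (μ ⊗ₘ κ)) :
    ∀ᵐ x ∂μ, Integrable (fun y => f (x, y)) (κ x) :=
  ((Measure.integrable_compProd_iff hf).mp hi).1

lemma ae_of_ae_map' {α β : Type*} {mα : MeasurableSpace α} {mβ : MeasurableSpace β}
    {μ : Measure α} {f : α → β} (hf : Measurable f) {p : β → Prop}
    (h : ∀ᵐ y ∂μ.map f, p y) : ∀ᵐ x ∂μ, p (f x) :=
  MeasureTheory.ae_of_ae_map hf.aemeasurable h

lemma isProbabilityMeasure_map' {α β : Type*} {mα : MeasurableSpace α} {mβ : MeasurableSpace β}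
    {μ : Measure α} [IsProbabilityMeasure μ] {f : α → β} (hf : Measurable f) :
    IsProbabilityMeasure (μ.map f) :=
  Measure.isProbabilityMeasure_map hf.aemeasurable

lemma setLIntegral_map' {α β : Type*} {mα : MeasurableSpace α} {mβ : MeasurableSpace β}
    {μ : Measure α} {f : β → ENNReal} {g : α → β} {s : Set β}
    (hs : MeasurableSet s) (hf : Measurable f) (hg : Measurable g) :
    ∫⁻ y in s, f y ∂(μ.map g) = ∫⁻ x in g ⁻¹' s, f (g x) ∂μ :=
  setLIntegral_map hs hf hg

section Main

variable {X : Type*} [MeasurableSpace X]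

theorem main_aux {Ω S T : Type*} (G : MeasurableSpace Ω) [m0 : MeasurableSpace Ω]
    [MetricSpace S] [CompleteSpace S] [SeparableSpace S] [MeasurableSpace S] [BorelSpace S]
    [MeasurableSpace T]
    (P : Measure Ω) [IsProbabilityMeasure P]
    (ξ : ℕ → Ω → S) (hξ : ∀ i, Measurable (ξ i))
    (ν : Ω → Measure S) (hνm : Measurable[G] ν) (hνp : ∀ ω, IsProbabilityMeasure (ν ω))
    (νInf : Ω → Measure (ℕ → S)) (hνInf : ∀ ω, IsIIDProduct (ν ω) (νInf ω))
    (hcond : ∀ A : Set (ℕ → S), MeasurableSet A →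
      P[(A.indicator fun _ => (1:ℝ)) ∘ (fun ω (i : ℕ) => ξ i ω) | G]
        =ᵐ[P] fun ω => (νInf ω A).toReal)
    (Y : Ω → T) (hY : Measurable[G] Y)
    (f : T × S → ℝ) (hf : Measurable f)
    (hint : Integrable (fun ω => f (Y ω, ξ 0 ω)) P)
    (Z : Ω → ℝ) (hZ : Z =ᵐ[P] P[fun ω => f (Y ω, ξ 0 ω) | G]) :
    P[Set.indicator
        {ω | Tendsto
          (fun n : ℕ => ((n : ℝ) + 1)⁻¹ * ∑ i ∈ Finset.range (n + 1), f (Y ω, ξ i ω))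
          atTop (𝓝 (Z ω))}
        (fun _ => (1:ℝ)) | G] =ᵐ[P] (fun _ => 1) ∧
    ∀ᵐ ω ∂P, Tendsto
      (fun n : ℕ => ((n : ℝ) + 1)⁻¹ * ∑ i ∈ Finset.range (n + 1), f (Y ω, ξ i ω))
      atTop (𝓝 ((P[fun ω' => f (Y ω', ξ 0 ω') | G]) ω)) := by
  classical
  -- first derive `G ≤ m0` from `hcond` (otherwise the conditional expectation is 0 ≠ 1 a.e.)
  by_cases hG : G ≤ m0
  swap
  · exfalso
    have h0 := hcond Set.univ MeasurableSet.univ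
    rw [condExp_of_not_le hG] at h0
    have hne : (ae P).NeBot := ae_neBot.mpr (IsProbabilityMeasure.ne_zero P)
    obtain ⟨ω, hω⟩ := h0.exists
    have : ((0 : Ω → ℝ) ω) = 1 := by
      rw [hω]
      haveI := (hνInf ω).1
      simp
    simp at this
  haveI : ∀ ω, IsProbabilityMeasure (νInf ω) := fun ω => (hνInf ω).1
  haveI : IsFiniteMeasure (P.trim hG) :=
    ⟨by rw [trim_measurableSet_eq hG MeasurableSet.univ]; exact measure_lt_top P _⟩
  -- the kernel
  have hker : Measurable[G] νInf := @iid_measurable S _ Ω G ν hνm hνp νInf hνInf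
  set κ : Kernel[G] Ω (ℕ → S) := @Kernel.mk Ω (ℕ → S) G _ νInf hker with hκdef
  haveI : IsMarkovKernel κ := ⟨fun ω => by exact (hνInf ω).1⟩
  have hπ : @Measurable Ω Ω m0 G id := measurable_id'' hG
  set Ξ : Ω → ℕ → S := fun ω i => ξ i ω with hΞdef
  have hΞ : Measurable Ξ := measurable_pi_lambda _ hξ
  -- rectangles
  have hrect : ∀ C, MeasurableSet[G] C → ∀ B, MeasurableSet B →
      P (id ⁻¹' C ∩ Ξ ⁻¹' B) = ∫⁻ ω' in C, κ ω' B ∂(@Measure.map Ω Ω m0 G id P) := by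
    intro C hC B hB
    have hcB := hcond B hB
    have hind : ((B.indicator fun _ => (1:ℝ)) ∘ Ξ) = (Ξ ⁻¹' B).indicator (fun _ => (1:ℝ)) := by
      funext ω
      by_cases h : Ξ ω ∈ B <;> simp [Function.comp, h, Set.indicator_apply]
    have hiInd : Integrable ((Ξ ⁻¹' B).indicator fun _ => (1:ℝ)) P :=
      (integrable_const (1:ℝ)).indicator (hΞ hB)
    have hiInd' : Integrable ((B.indicator fun _ => (1:ℝ)) ∘ Ξ) P := by rw [hind]; exact hiInd
    have e1 := setIntegral_condExp hG hiInd' hC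
    have e2 : ∫ x in C, (P[(B.indicator fun _ => (1:ℝ)) ∘ Ξ | G]) x ∂P
        = ∫ x in C, (νInf x B).toReal ∂P :=
      setIntegral_congr_ae (hG C hC) (hcB.mono fun x hx _ => hx)
    have h1 : ∫ x in C, ((B.indicator fun _ => (1:ℝ)) ∘ Ξ) x ∂P
        = ∫ x in C, (νInf x B).toReal ∂P := e1.symm.trans e2
    have h2 : ∫ x in C, ((B.indicator fun _ => (1:ℝ)) ∘ Ξ) x ∂P
        = (P (C ∩ Ξ ⁻¹' B)).toReal := by
      rw [hind, setIntegral_indicator (hΞ hB), setIntegral_const]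
      simp
      rfl
    have hνmeas : Measurable fun x => νInf x B :=
      ((Measure.measurable_coe hB).comp hker).mono hG le_rfl
    have h3 : ∫ x in C, (νInf x B).toReal ∂P = (∫⁻ x in C, νInf x B ∂P).toReal := by
      refine integral_toReal (hνmeas.aemeasurable.restrict) ?_
      refine ae_of_all _ fun x => ?_
      exact lt_of_le_of_lt prob_le_one ENNReal.one_lt_top
    have hfin : ∫⁻ x in C, νInf x B ∂P ≠ ⊤ := by
      refine ne_top_of_le_ne_top (measure_ne_top P C) ?_
      calc ∫⁻ x in C, νInf x B ∂P ≤ ∫⁻ _ in C, 1 ∂P :=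
            lintegral_mono fun x => prob_le_one
        _ = P C := by rw [setLIntegral_const]; simp
    have h4 : P (C ∩ Ξ ⁻¹' B) = ∫⁻ x in C, νInf x B ∂P := by
      have h5 := (h2.symm.trans h1).trans h3
      exact (ENNReal.toReal_eq_toReal_iff' (measure_ne_top P _) hfin).mp h5
    have h5 : ∫⁻ ω' in C, κ ω' B ∂(@Measure.map Ω Ω m0 G id P) = ∫⁻ x in C, νInf x B ∂P := by
      rw [@setLIntegral_map' Ω Ω m0 G P (fun ω' => κ ω' B) id C hC
        ((Measure.measurable_coe hB).comp κ.measurable) hπ]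
      rfl
    rw [h5, ← h4]
    rfl
  have hmap : @Measure.map Ω (Ω × (ℕ → S)) m0 (@Prod.instMeasurableSpace Ω (ℕ → S) G _)
        (fun ω => (id ω, Ξ ω)) P = (@Measure.map Ω Ω m0 G id P) ⊗ₘ κ :=
    @aux_map Ω Ω (ℕ → S) m0 G _ P _ id hπ κ _ Ξ hΞ hrect
  -- the key conditional expectation identity
  have key : ∀ g : Ω × (ℕ → S) → ℝ,
      @StronglyMeasurable _ _ _ (@Prod.instMeasurableSpace Ω (ℕ → S) G _) g →
      Integrable (fun ω => g (ω, Ξ ω)) P →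
      P[(fun ω => g (ω, Ξ ω)) | G] =ᵐ[P] fun ω => ∫ x, g (ω, x) ∂νInf ω := by
    intro g hg hgi
    have h := @aux_condexp Ω Ω (ℕ → S) m0 G _ P _ id hπ κ _ Ξ hΞ hmap g hg hgi
    rwa [MeasurableSpace.comap_id] at h
  -- apply key to g₁
  set g₁ : Ω × (ℕ → S) → ℝ := fun p => f (Y p.1, p.2 0) with hg₁def
  have hg₁m : @Measurable (Ω × (ℕ → S)) ℝ (@Prod.instMeasurableSpace Ω (ℕ → S) G _) _ g₁ := by
    exact hf.comp ((hY.comp measurable_fst).prodMk ((measurable_pi_apply 0).comp measurable_snd))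
  have hg₁ : @StronglyMeasurable _ _ _ (@Prod.instMeasurableSpace Ω (ℕ → S) G _) g₁ :=
    hg₁m.stronglyMeasurable
  have hg₁i : Integrable (fun ω => g₁ (ω, Ξ ω)) P := hint
  have key₁ : P[(fun ω => g₁ (ω, Ξ ω)) | G] =ᵐ[P] fun ω => ∫ x, f (Y ω, x 0) ∂νInf ω :=
    key g₁ hg₁ hg₁i
  set Z' : Ω → ℝ := P[(fun ω => g₁ (ω, Ξ ω)) | G] with hZ'def
  have hpair : @Measurable Ω (Ω × (ℕ → S)) m0 (@Prod.instMeasurableSpace Ω (ℕ → S) G _)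
      (fun ω => (ω, Ξ ω)) := hπ.prodMk hΞ
  have hg₁ρ : Integrable g₁ ((@Measure.map Ω Ω m0 G id P) ⊗ₘ κ) := by
    rw [← hmap]
    exact (integrable_map_iff' (mβ := @Prod.instMeasurableSpace Ω (ℕ → S) G _)
      hg₁.aestronglyMeasurable hpair).mpr hg₁i
  haveI : IsProbabilityMeasure (@Measure.map Ω Ω m0 G id P) :=
    isProbabilityMeasure_map' (mβ := G) hπ
  have hsec := ae_integrable_compProd' (mα := G) hg₁ρ.aestronglyMeasurable hg₁ρ
  have hsecP : ∀ᵐ ω ∂P, Integrable (fun x => f (Y ω, x 0)) (νInf ω) :=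
    ae_of_ae_map' (mβ := G) hπ hsec
  -- the tendsto event
  set A : Set (Ω × (ℕ → S)) := {p | Tendsto
      (fun n : ℕ => ((n : ℝ) + 1)⁻¹ * ∑ i ∈ Finset.range (n + 1), f (Y p.1, p.2 i))
      atTop (𝓝 (Z' p.1))} with hAdef
  have hA : @MeasurableSet (Ω × (ℕ → S)) (@Prod.instMeasurableSpace Ω (ℕ → S) G _) A := by
    have hFn : ∀ n : ℕ, @Measurable _ ℝ (@Prod.instMeasurableSpace Ω (ℕ → S) G _) _
        (fun p : Ω × (ℕ → S) =>
          ((n : ℝ) + 1)⁻¹ * ∑ i ∈ Finset.range (n + 1), f (Y p.1, p.2 i)) := by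
      intro n
      refine Measurable.const_mul ?_ _
      refine Finset.measurable_sum _ fun i _ => ?_
      exact hf.comp ((hY.comp measurable_fst).prodMk ((measurable_pi_apply i).comp measurable_snd))
    have hgm : @Measurable _ ℝ (@Prod.instMeasurableSpace Ω (ℕ → S) G _) _
        (fun p : Ω × (ℕ → S) => Z' p.1) :=
      stronglyMeasurable_condExp.measurable.comp measurable_fst
    exact measurableSet_tendsto_fun' hFn hgm
  have hsect : ∀ ω : Ω, MeasurableSet {x : ℕ → S | (ω, x) ∈ A} := fun ω =>
    (@measurable_prodMk_left Ω (ℕ → S) G _ ω) hA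
  have hAone : ∀ᵐ ω ∂P, (νInf ω) {x | (ω, x) ∈ A} = 1 := by
    filter_upwards [hsecP, key₁] with ω hInt hmean'
    haveI := (hνInf ω).1
    have hfm : Measurable (fun s : S => f (Y ω, s)) := hf.comp measurable_prodMk_left
    have hindep : Pairwise (Function.onFun (IndepFun · · (νInf ω)) (fun i (x : ℕ → S) => f (Y ω, x i))) := by
      intro i j hij
      exact ((hνInf ω).indepFun_eval hij).comp hfm hfm
    have hident : ∀ i, IdentDistrib (fun x : ℕ → S => f (Y ω, x i))
        (fun x : ℕ → S => f (Y ω, x 0)) (νInf ω) (νInf ω) := by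
      intro i
      have base : IdentDistrib (fun x : ℕ → S => x i) (fun x : ℕ → S => x 0)
          (νInf ω) (νInf ω) :=
        ⟨(measurable_pi_apply i).aemeasurable, (measurable_pi_apply 0).aemeasurable, by
          rw [(hνInf ω).map_eval i, (hνInf ω).map_eval 0]⟩
      exact base.comp hfm
    have hsll := strong_law_ae_real (fun i (x : ℕ → S) => f (Y ω, x i)) hInt hindep hident
    have hmem : ∀ᵐ x ∂νInf ω, (ω, x) ∈ A := by
      filter_upwards [hsll] with x hx
      have h : Tendsto (fun n : ℕ => ((n : ℝ) + 1)⁻¹ * ∑ i ∈ Finset.range (n + 1), f (Y ω, x i))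
          atTop (𝓝 ((νInf ω)[fun x : ℕ → S => f (Y ω, x 0)])) := by
        refine (hx.comp (tendsto_add_atTop_nat 1)).congr fun n => ?_
        simp only [Function.comp_apply]
        push_cast
        ring
      show Tendsto _ atTop (𝓝 (Z' ω))
      rw [hmean']
      exact h
    have h0 : νInf ω ({x : ℕ → S | (ω, x) ∈ A}ᶜ) = 0 := by
      rw [ae_iff] at hmem
      rw [Set.compl_setOf]
      exact hmem
    exact (prob_compl_eq_zero_iff₀ (hsect ω).nullMeasurableSet).mp h0
  -- indicator of the event
  set g₂ : Ω × (ℕ → S) → ℝ := A.indicator (fun _ => (1:ℝ)) with hg₂def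
  have hg₂ : @StronglyMeasurable _ ℝ _ (@Prod.instMeasurableSpace Ω (ℕ → S) G _) g₂ := by
    exact stronglyMeasurable_const.indicator hA
  have hpre : (fun ω => g₂ (ω, Ξ ω)) = ((fun ω => (ω, Ξ ω)) ⁻¹' A).indicator (fun _ => (1:ℝ)) := by
    funext ω
    by_cases h : (ω, Ξ ω) ∈ A <;> simp [hg₂def, Set.indicator_apply, h]
  have hBmeas : MeasurableSet ((fun ω => (ω, Ξ ω)) ⁻¹' A) := hpair hA
  have hg₂i : Integrable (fun ω => g₂ (ω, Ξ ω)) P := by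
    rw [hpre]; exact (integrable_const (1:ℝ)).indicator hBmeas
  have key₂ := key g₂ hg₂ hg₂i
  have hint_one : (fun ω => ∫ x, g₂ (ω, x) ∂νInf ω) =ᵐ[P] fun _ => (1:ℝ) := by
    filter_upwards [hAone] with ω hω
    have hsec_eq : (fun x => g₂ (ω, x)) = ({x : ℕ → S | (ω, x) ∈ A}).indicator (fun _ => (1:ℝ)) := by
      funext x
      by_cases h : (ω, x) ∈ A <;> simp [hg₂def, Set.indicator_apply, h]
    rw [hsec_eq, integral_indicator_const (1:ℝ) (hsect ω), measureReal_def, hω]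
    simp
  have hcondone : P[(fun ω => g₂ (ω, Ξ ω)) | G] =ᵐ[P] fun _ => (1:ℝ) := key₂.trans hint_one
  constructor
  · refine EventuallyEq.trans (condExp_congr_ae ?_) hcondone
    filter_upwards [hZ] with ω hω
    have hmem : (ω ∈ {ω' | Tendsto
        (fun n : ℕ => ((n : ℝ) + 1)⁻¹ * ∑ i ∈ Finset.range (n + 1), f (Y ω', ξ i ω'))
        atTop (𝓝 (Z ω'))}) ↔ (ω, Ξ ω) ∈ A := by
      rw [hAdef]
      simp only [Set.mem_setOf_eq]
      rw [hω]
    by_cases h : (ω, Ξ ω) ∈ A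
    · rw [Set.indicator_of_mem (hmem.mpr h), hg₂def, Set.indicator_of_mem h]
    · rw [Set.indicator_of_notMem (fun hc => h (hmem.mp hc)), hg₂def,
        Set.indicator_of_notMem h]
  · have hintegral : ∫ ω, g₂ (ω, Ξ ω) ∂P = 1 := by
      rw [← integral_condExp hG (f := fun ω => g₂ (ω, Ξ ω)) (μ := P), integral_congr_ae hcondone]
      simp
    rw [hpre, integral_indicator_const (1:ℝ) hBmeas] at hintegral
    simp only [smul_eq_mul, mul_one] at hintegral
    have hPB : P ((fun ω => (ω, Ξ ω)) ⁻¹' A) = 1 := by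
      rwa [measureReal_def, ← ENNReal.toReal_one,
        ENNReal.toReal_eq_toReal_iff' (measure_ne_top P _) ENNReal.one_ne_top] at hintegral
    have hae : ∀ᵐ ω ∂P, (ω, Ξ ω) ∈ A := by
      rw [ae_iff]
      have hcompl : {ω | ¬ (ω, Ξ ω) ∈ A} = ((fun ω => (ω, Ξ ω)) ⁻¹' A)ᶜ := by
        ext ω; simp
      rw [hcompl, measure_compl hBmeas (measure_ne_top P _), hPB, measure_univ]
      simp
    filter_upwards [hae] with ω hω
    exact hω

end Main

theorem main_aux' {Ω S T : Type*} {m0 : MeasurableSpace Ω} (G : MeasurableSpace Ω)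
    [MetricSpace S] [CompleteSpace S] [SeparableSpace S] [MeasurableSpace S] [BorelSpace S]
    [MeasurableSpace T]
    (P : @Measure Ω m0) [IsProbabilityMeasure P]
    (ξ : ℕ → Ω → S) (hξ : ∀ i, @Measurable Ω S m0 _ (ξ i))
    (ν : Ω → Measure S) (hνm : Measurable[G] ν) (hνp : ∀ ω, IsProbabilityMeasure (ν ω))
    (νInf : Ω → Measure (ℕ → S)) (hνInf : ∀ ω, IsIIDProduct (ν ω) (νInf ω))
    (hcond : ∀ A : Set (ℕ → S), MeasurableSet A →
      P[(A.indicator fun _ => (1:ℝ)) ∘ (fun ω (i : ℕ) => ξ i ω) | G]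
        =ᵐ[P] fun ω => (νInf ω A).toReal)
    (Y : Ω → T) (hY : Measurable[G] Y)
    (f : T × S → ℝ) (hf : Measurable f)
    (hint : Integrable (fun ω => f (Y ω, ξ 0 ω)) P)
    (Z : Ω → ℝ) (hZ : Z =ᵐ[P] P[fun ω => f (Y ω, ξ 0 ω) | G]) :
    P[Set.indicator
        {ω | Tendsto
          (fun n : ℕ => ((n : ℝ) + 1)⁻¹ * ∑ i ∈ Finset.range (n + 1), f (Y ω, ξ i ω))
          atTop (𝓝 (Z ω))}
        (fun _ => (1:ℝ)) | G] =ᵐ[P] (fun _ => 1) ∧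
    ∀ᵐ ω ∂P, Tendsto
      (fun n : ℕ => ((n : ℝ) + 1)⁻¹ * ∑ i ∈ Finset.range (n + 1), f (Y ω, ξ i ω))
      atTop (𝓝 ((P[fun ω' => f (Y ω', ξ 0 ω') | G]) ω)) :=
  @main_aux Ω S T G m0 _ _ _ _ _ _ P _ ξ hξ ν hνm hνp νInf hνInf hcond Y hY f hf hint Z hZ

/-- Conditional strong law of large numbers: if `ξ` is conditionally i.i.d. given `𝒢`,
`Y ∈ 𝒢`, `E|f(Y,ξ₁)| < ∞`, and `Z` is any version of `E[f(Y,ξ₁) | 𝒢]`, then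
`P(lim_n n⁻¹ ∑_{i=1}^n f(Y,ξ_i) = Z | 𝒢) = 1` a.s.; in particular
`n⁻¹ ∑_{i=1}^n f(Y,ξ_i) → E[f(Y,ξ₁) | 𝒢]` a.s. -/
theorem stmt10 {Ω S T : Type*} [MeasurableSpace Ω]
    [MetricSpace S] [CompleteSpace S] [SeparableSpace S] [MeasurableSpace S] [BorelSpace S]
    [MeasurableSpace T]
    (P : Measure Ω) [IsProbabilityMeasure P]
    (ξ : ℕ → Ω → S) (hξ : ∀ i, Measurable (ξ i))
    (G : MeasurableSpace Ω) (hG : G ≤ ‹MeasurableSpace Ω›)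
    (ν : Ω → Measure S) (hνm : Measurable[G] ν) (hνp : ∀ ω, IsProbabilityMeasure (ν ω))
    (νInf : Ω → Measure (ℕ → S)) (hνInf : ∀ ω, IsIIDProduct (ν ω) (νInf ω))
    (hcond : ∀ A : Set (ℕ → S), MeasurableSet A →
      P[(A.indicator fun _ => (1:ℝ)) ∘ (fun ω (i : ℕ) => ξ i ω) | G]
        =ᵐ[P] fun ω => (νInf ω A).toReal)
    (Y : Ω → T) (hY : Measurable[G] Y)
    (f : T × S → ℝ) (hf : Measurable f)
    (hint : Integrable (fun ω => f (Y ω, ξ 0 ω)) P)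
    (Z : Ω → ℝ) (hZ : Z =ᵐ[P] P[fun ω => f (Y ω, ξ 0 ω) | G]) :
    P[Set.indicator
        {ω | Tendsto
          (fun n : ℕ => ((n : ℝ) + 1)⁻¹ * ∑ i ∈ Finset.range (n + 1), f (Y ω, ξ i ω))
          atTop (𝓝 (Z ω))}
        (fun _ => (1:ℝ)) | G] =ᵐ[P] (fun _ => 1) ∧
    ∀ᵐ ω ∂P, Tendsto
      (fun n : ℕ => ((n : ℝ) + 1)⁻¹ * ∑ i ∈ Finset.range (n + 1), f (Y ω, ξ i ω))
      atTop (𝓝 ((P[fun ω' => f (Y ω', ξ 0 ω') | G]) ω)) :=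
  main_aux' G P ξ hξ ν hνm hνp νInf hνInf hcond Y hY f hf hint Z hZ
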